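/- If A and B are crowns of a graph G, then A ∪ (B − N[A]) and B ∪ (A − N[B]) are crowns of G and they have the same cardinality. (Hence the family of crowns forms an augmentoid.) -/

import Mathlib

open Finset

variable {V : Type*}

namespace CrownPaper

variable [Fintype V] [DecidableEq V]

/-- The (open) neighborhood of a finite set of vertices. -/
def nbrs (G : SimpleGraph V) [DecidableRel G.Adj] (A : Finset V) : Finset V :=
  univ.filter (fun v => ∃ a ∈ A, G.Adj v a)

/-- The closed neighborhood `N[A] = A ∪ N(A)`. -/
def closedNbrs (G : SimpleGraph V) [DecidableRel G.Adj] (A : Finset V) : Finset V :=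
  A ∪ nbrs G A

/-- `S` is an independent set of `G`. -/
def IsIndep (G : SimpleGraph V) (S : Finset V) : Prop :=
  ∀ a ∈ S, ∀ b ∈ S, ¬ G.Adj a b

/-- The difference `d(S) = |S| - |N(S)|`. -/
def diff (G : SimpleGraph V) [DecidableRel G.Adj] (S : Finset V) : ℤ :=
  (S.card : ℤ) - ((nbrs G S).card : ℤ)

/-- `S` is a critical independent set. -/
def IsCritIndep (G : SimpleGraph V) [DecidableRel G.Adj] (S : Finset V) : Prop :=
  IsIndep G S ∧ ∀ I : Finset V, IsIndep G I → diff G I ≤ diff G S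

/-- `S` is a crown: an independent set with a matching from `N(S)` into `S`. -/
def IsCrown (G : SimpleGraph V) [DecidableRel G.Adj] (S : Finset V) : Prop :=
  IsIndep G S ∧ ∃ f : V → V, (∀ v ∈ nbrs G S, f v ∈ S ∧ G.Adj v (f v)) ∧
    Set.InjOn f (nbrs G S : Set V)

/-- `S` is a local maximum independent set: a maximum independent set of `G[N[S]]`. -/
def IsLocalMaxIndep (G : SimpleGraph V) [DecidableRel G.Adj] (S : Finset V) : Prop :=
  IsIndep G S ∧ ∀ I : Finset V, IsIndep G I → I ⊆ closedNbrs G S → I.card ≤ S.card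

/-- The independence number. -/
noncomputable def alpha (G : SimpleGraph V) : ℕ :=
  sSup {n | ∃ S : Finset V, IsIndep G S ∧ S.card = n}

/-- `M` is a matching of `G`, given as a finite set of (ordered) edges. -/
def IsMatching (G : SimpleGraph V) (M : Finset (V × V)) : Prop :=
  (∀ e ∈ M, G.Adj e.1 e.2) ∧
  ∀ e ∈ M, ∀ e' ∈ M, e ≠ e' →
    e.1 ≠ e'.1 ∧ e.1 ≠ e'.2 ∧ e.2 ≠ e'.1 ∧ e.2 ≠ e'.2

/-- The matching number. -/
noncomputable def mu (G : SimpleGraph V) : ℕ :=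
  sSup {n | ∃ M : Finset (V × V), IsMatching G M ∧ M.card = n}

/-- `G` has a perfect matching. -/
def HasPerfectMatching (G : SimpleGraph V) : Prop :=
  ∃ M : Finset (V × V), IsMatching G M ∧ ∀ v : V, ∃ e ∈ M, v = e.1 ∨ v = e.2

/-- `G` is a König–Egerváry graph: `α(G) + μ(G) = |V(G)|`. -/
def IsKonigEgervary (G : SimpleGraph V) : Prop :=
  alpha G + mu G = Fintype.card V

/-- `G` is bipartite. -/
def IsBipartite (G : SimpleGraph V) : Prop :=
  ∃ X : Set V, ∀ a b : V, G.Adj a b → (a ∈ X ↔ b ∉ X)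

end CrownPaper

open CrownPaper

namespace CrownAux

variable [Fintype V] [DecidableEq V]

lemma mem_nbrs {G : SimpleGraph V} [DecidableRel G.Adj] {A : Finset V} {v : V} :
    v ∈ nbrs G A ↔ ∃ a ∈ A, G.Adj v a := by
  simp [nbrs]

/-- Key lemma: if `v ∈ N(B) \ N[A]`, then `fB v ∉ N(A)`. -/
lemma key {G : SimpleGraph V} [DecidableRel G.Adj] {A B : Finset V}
    {fA fB : V → V}
    (hfA : ∀ v ∈ nbrs G A, fA v ∈ A ∧ G.Adj v (fA v))
    (hfAi : Set.InjOn fA (nbrs G A : Set V))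
    (hfB : ∀ v ∈ nbrs G B, fB v ∈ B ∧ G.Adj v (fB v))
    (hfBi : Set.InjOn fB (nbrs G B : Set V))
    {v : V} (hv : v ∈ nbrs G B) (hvA : v ∉ A) :
    fB v ∉ nbrs G A := by
  intro hcon
  set β : Finset V := B ∩ nbrs G A with hβ
  -- fA maps β into N(B)
  have hfAβ : ∀ b ∈ β, fA b ∈ nbrs G B := by
    intro b hb
    rw [hβ, mem_inter] at hb
    obtain ⟨hbA, hb2⟩ := (hfA b hb.2)
    exact mem_nbrs.mpr ⟨b, hb.1, hb2.symm⟩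
  -- φ = fB ∘ fA maps β to β
  have hφmem : ∀ b ∈ β, fB (fA b) ∈ β := by
    intro b hb
    have hbn : b ∈ nbrs G A := (mem_inter.mp hb).2
    have h1 := hfA b hbn
    have h2 := hfB _ (hfAβ b hb)
    rw [hβ, mem_inter]
    exact ⟨h2.1, mem_nbrs.mpr ⟨fA b, h1.1, h2.2.symm⟩⟩
  have hφinj : ∀ a₁ ∈ β, ∀ a₂ ∈ β, fB (fA a₁) = fB (fA a₂) → a₁ = a₂ := by
    intro a₁ h₁ a₂ h₂ h
    have := hfBi (by exact_mod_cast hfAβ a₁ h₁) (by exact_mod_cast hfAβ a₂ h₂) h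
    exact hfAi (by exact_mod_cast (mem_inter.mp h₁).2)
      (by exact_mod_cast (mem_inter.mp h₂).2) this
  -- surjectivity of φ on β
  have hsurj := Finset.surj_on_of_inj_on_of_card_le (s := β) (t := β)
    (fun b _ => fB (fA b)) (fun b hb => hφmem b hb) (fun a₁ a₂ h₁ h₂ h => hφinj a₁ h₁ a₂ h₂ h)
    le_rfl
  have hfBvβ : fB v ∈ β := by
    rw [hβ, mem_inter]
    exact ⟨(hfB v hv).1, hcon⟩
  obtain ⟨b, hb, heq⟩ := hsurj _ hfBvβ
  -- fB v = fB (fA b), so v = fA b ∈ A, contradiction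
  have : v = fA b := hfBi (by exact_mod_cast hv) (by exact_mod_cast hfAβ b hb) heq
  exact hvA (this ▸ (hfA b (mem_inter.mp hb).2).1)

/-- Union-of-crowns lemma. -/
lemma crown_union {G : SimpleGraph V} [DecidableRel G.Adj] {A B : Finset V}
    (hA : IsCrown G A) (hB : IsCrown G B) :
    IsCrown G (A ∪ (B \ closedNbrs G A)) := by
  obtain ⟨hAind, fA, hfA, hfAi⟩ := hA
  obtain ⟨hBind, fB, hfB, hfBi⟩ := hB
  set C : Finset V := A ∪ (B \ closedNbrs G A) with hC
  -- basic facts about membership in N(C)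
  have hnc : ∀ v : V, v ∈ nbrs G C → v ∉ nbrs G A →
      v ∈ nbrs G B ∧ v ∉ A := by
    intro v hv hvA
    obtain ⟨c, hc, hadj⟩ := mem_nbrs.mp hv
    rw [hC, mem_union] at hc
    rcases hc with hc | hc
    · exact absurd (mem_nbrs.mpr ⟨c, hc, hadj⟩) hvA
    · rw [mem_sdiff] at hc
      constructor
      · exact mem_nbrs.mpr ⟨c, hc.1, hadj⟩
      · intro hvA'
        exact hc.2 (mem_union.mpr (Or.inr (mem_nbrs.mpr ⟨v, hvA', hadj.symm⟩)))
  constructor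
  · -- independence
    intro a ha b hb hadj
    rw [hC, mem_union] at ha hb
    rcases ha with ha | ha <;> rcases hb with hb | hb
    · exact hAind a ha b hb hadj
    · rw [mem_sdiff] at hb
      exact hb.2 (mem_union.mpr (Or.inr (mem_nbrs.mpr ⟨a, ha, hadj.symm⟩))) 
    · rw [mem_sdiff] at ha
      exact ha.2 (mem_union.mpr (Or.inr (mem_nbrs.mpr ⟨b, hb, hadj⟩)))
    · exact hBind a (mem_sdiff.mp ha).1 b (mem_sdiff.mp hb).1 hadj
  · refine ⟨fun v => if v ∈ nbrs G A then fA v else fB v, ?_, ?_⟩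
    · intro v hv
      by_cases hvA : v ∈ nbrs G A
      · simp only [hvA, if_pos]
        exact ⟨mem_union.mpr (Or.inl (hfA v hvA).1), (hfA v hvA).2⟩
      · simp only [hvA, if_neg, if_false]
        obtain ⟨hvB, hvnA⟩ := hnc v hv hvA
        have hkey := key hfA hfAi hfB hfBi hvB hvnA
        refine ⟨mem_union.mpr (Or.inr ?_), (hfB v hvB).2⟩
        rw [mem_sdiff]
        refine ⟨(hfB v hvB).1, ?_⟩
        rw [closedNbrs, mem_union]
        rintro (h | h)
        · exact hvA (mem_nbrs.mpr ⟨fB v, h, (hfB v hvB).2⟩)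
        · exact hkey h
    · intro u hu v hv huv
      simp only [Finset.mem_coe] at hu hv
      by_cases huA : u ∈ nbrs G A <;> by_cases hvA : v ∈ nbrs G A
      · simp only [huA, hvA, if_pos] at huv
        exact hfAi (by exact_mod_cast huA) (by exact_mod_cast hvA) huv
      · exfalso
        simp only [huA, hvA, if_pos, if_neg, if_false] at huv
        obtain ⟨hvB, _⟩ := hnc v hv hvA
        exact hvA (mem_nbrs.mpr ⟨fB v, huv ▸ (hfA u huA).1, (hfB v hvB).2⟩)
      · exfalso
        simp only [huA, hvA, if_pos, if_neg, if_false] at huv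
        obtain ⟨huB, _⟩ := hnc u hu huA
        exact huA (mem_nbrs.mpr ⟨fB u, huv ▸ (hfA v hvA).1, (hfB u huB).2⟩)
      · simp only [huA, hvA, if_neg, if_false] at huv
        obtain ⟨huB, _⟩ := hnc u hu huA
        obtain ⟨hvB, _⟩ := hnc v hv hvA
        exact hfBi (by exact_mod_cast huB) (by exact_mod_cast hvB) huv

end CrownAux

namespace CrownAux2
open CrownAux
variable [Fintype V] [DecidableEq V]

lemma card_beta {G : SimpleGraph V} [DecidableRel G.Adj] {A B : Finset V}
    (hA : IsCrown G A) (hB : IsCrown G B) :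
    (B ∩ nbrs G A).card = (A ∩ nbrs G B).card := by
  obtain ⟨hAind, fA, hfA, hfAi⟩ := hA
  obtain ⟨hBind, fB, hfB, hfBi⟩ := hB
  apply le_antisymm
  · apply Finset.card_le_card_of_injOn fA
    · intro b hb
      rw [Finset.mem_coe, mem_inter] at hb ⊢
      exact ⟨(hfA b hb.2).1, mem_nbrs.mpr ⟨b, hb.1, (hfA b hb.2).2.symm⟩⟩
    · intro a ha b hb h
      simp only [Finset.coe_inter, Set.mem_inter_iff, Finset.mem_coe] at ha hb
      exact hfAi (by exact_mod_cast ha.2) (by exact_mod_cast hb.2) h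
  · apply Finset.card_le_card_of_injOn fB
    · intro b hb
      rw [Finset.mem_coe, mem_inter] at hb ⊢
      exact ⟨(hfB b hb.2).1, mem_nbrs.mpr ⟨b, hb.1, (hfB b hb.2).2.symm⟩⟩
    · intro a ha b hb h
      simp only [Finset.coe_inter, Set.mem_inter_iff, Finset.mem_coe] at ha hb
      exact hfBi (by exact_mod_cast ha.2) (by exact_mod_cast hb.2) h

lemma card_eq {G : SimpleGraph V} [DecidableRel G.Adj] {A B : Finset V}
    (hAind : IsIndep G A) :
    (A ∪ (B \ closedNbrs G A)).card + (B ∩ A).card + (B ∩ nbrs G A).card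
      = A.card + B.card := by
  have h1 : Disjoint A (B \ closedNbrs G A) := by
    rw [Finset.disjoint_left]
    intro a ha hb
    exact (mem_sdiff.mp hb).2 (mem_union.mpr (Or.inl ha))
  rw [Finset.card_union_of_disjoint h1]
  have h2 : (B \ closedNbrs G A).card + (B ∩ closedNbrs G A).card = B.card :=
    Finset.card_sdiff_add_card_inter B (closedNbrs G A)
  have h3 : B ∩ closedNbrs G A = (B ∩ A) ∪ (B ∩ nbrs G A) := by
    rw [closedNbrs, Finset.inter_union_distrib_left]
  have h4 : Disjoint (B ∩ A) (B ∩ nbrs G A) := by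
    rw [Finset.disjoint_left]
    intro a ha hb
    obtain ⟨b, hbA, hadj⟩ := mem_nbrs.mp (mem_inter.mp hb).2
    exact hAind _ (mem_inter.mp ha).2 _ hbA hadj
  have h5 : (B ∩ closedNbrs G A).card = (B ∩ A).card + (B ∩ nbrs G A).card := by
    rw [h3, Finset.card_union_of_disjoint h4]
  omega

end CrownAux2


theorem crowns_augmentation (G : SimpleGraph V) [Fintype V] [DecidableEq V]
    [DecidableRel G.Adj] (A B : Finset V) (hA : IsCrown G A) (hB : IsCrown G B) :
    IsCrown G (A ∪ (B \ closedNbrs G A)) ∧ IsCrown G (B ∪ (A \ closedNbrs G B)) ∧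
    (A ∪ (B \ closedNbrs G A)).card = (B ∪ (A \ closedNbrs G B)).card := by
  refine ⟨CrownAux.crown_union hA hB, CrownAux.crown_union hB hA, ?_⟩
  have e1 := CrownAux2.card_eq (G := G) (A := A) (B := B) hA.1
  have e2 := CrownAux2.card_eq (G := G) (A := B) (B := A) hB.1
  have e3 := CrownAux2.card_beta hA hB
  have e4 : (B ∩ A).card = (A ∩ B).card := by rw [inter_comm]
  omega
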